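/- arXiv:1801.06205 — 3 statements merged into one kernel-verified Lean document; each statement's English description precedes it below -/
import Mathlib

section
/- An element c of K is group-like (i.e. c ≠ 0 and Δ(c) = c⊗c) if and only if c = 1 or c = a^2. In particular K has exactly two group-like elements. -/
open TensorProduct

noncomputable section

/-- Generators of the algebra `K`. -/
inductive KGen : Type
  | a | b

variable (k : Type) [Field k] (ξ : k)

/-- The defining relations of `K`: `a⁴ = 1`, `b² = 0`, `ba = ξ·ab`. -/
inductive KRel : FreeAlgebra k KGen → FreeAlgebra k KGen → Prop
  | a4 : KRel ((FreeAlgebra.ι k KGen.a) ^ 4) 1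
  | b2 : KRel ((FreeAlgebra.ι k KGen.b) ^ 2) 0
  | ba : KRel (FreeAlgebra.ι k KGen.b * FreeAlgebra.ι k KGen.a)
      (ξ • (FreeAlgebra.ι k KGen.a * FreeAlgebra.ι k KGen.b))

/-- The algebra `K`, the quotient of the free algebra on `a, b` by the relations. -/
abbrev KAlg : Type := RingQuot (KRel k ξ)

/-- The image of the generator `a` in `K`. -/
def aK : KAlg k ξ := RingQuot.mkAlgHom k (KRel k ξ) (FreeAlgebra.ι k KGen.a)

/-- The image of the generator `b` in `K`. -/
def bK : KAlg k ξ := RingQuot.mkAlgHom k (KRel k ξ) (FreeAlgebra.ι k KGen.b)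


-- relations in KAlg
lemma Kha4 : aK k ξ ^ 4 = 1 := by
  have := RingQuot.mkAlgHom_rel k (KRel.a4 (k := k) (ξ := ξ))
  simpa [aK, map_pow, map_one] using this

lemma Khb2 : bK k ξ ^ 2 = 0 := by
  have := RingQuot.mkAlgHom_rel k (KRel.b2 (k := k) (ξ := ξ))
  simpa [bK, map_pow, map_zero] using this

lemma Khba : bK k ξ * aK k ξ = ξ • (aK k ξ * bK k ξ) := by
  have := RingQuot.mkAlgHom_rel k (KRel.ba (k := k) (ξ := ξ))
  simpa [aK, bK, map_mul, map_smul] using this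

-- monomials
def MK (i d : ℕ) : KAlg k ξ := aK k ξ ^ i * bK k ξ ^ d

lemma MK_comm (j : ℕ) : bK k ξ * aK k ξ ^ j = ξ ^ j • (aK k ξ ^ j * bK k ξ) := by
  induction j with
  | zero => simp
  | succ n ih =>
    rw [pow_succ, ← mul_assoc, ih, smul_mul_assoc, mul_assoc, Khba, mul_smul_comm, smul_smul,
      pow_succ, ← mul_assoc]

lemma MK_commd (d j : ℕ) : bK k ξ ^ d * aK k ξ ^ j = ξ ^ (d * j) • (aK k ξ ^ j * bK k ξ ^ d) := by
  induction d with
  | zero => simp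
  | succ n ih =>
    rw [pow_succ, mul_assoc, MK_comm, mul_smul_comm, ← mul_assoc, ih, smul_mul_assoc, smul_smul,
      ← pow_add, mul_assoc, ← pow_succ]
    ring_nf

lemma MK_mul (i d j e : ℕ) :
    MK k ξ i d * MK k ξ j e = ξ ^ (d * j) • MK k ξ (i + j) (d + e) := by
  unfold MK
  calc aK k ξ ^ i * bK k ξ ^ d * (aK k ξ ^ j * bK k ξ ^ e)
      = aK k ξ ^ i * (bK k ξ ^ d * aK k ξ ^ j) * bK k ξ ^ e := by
        rw [mul_assoc, mul_assoc, mul_assoc]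
    _ = ξ ^ (d * j) • (aK k ξ ^ i * (aK k ξ ^ j * bK k ξ ^ d) * bK k ξ ^ e) := by
        rw [MK_commd, mul_smul_comm, smul_mul_assoc]
    _ = ξ ^ (d * j) • (aK k ξ ^ (i + j) * bK k ξ ^ (d + e)) := by
        simp [pow_add, mul_assoc]

lemma MK_b2 (i d : ℕ) : MK k ξ i (d + 2) = 0 := by
  unfold MK
  rw [pow_add, Khb2, mul_zero, mul_zero]

lemma MK_a4 (i d : ℕ) : MK k ξ (i + 4) d = MK k ξ i d := by
  unfold MK
  rw [pow_add, Kha4, mul_one]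


-- the regular representation
abbrev VK := ZMod 4 × ZMod 2 → k

def LaK : VK k →ₗ[k] VK k where
  toFun f p := f (p.1 - 1, p.2)
  map_add' _ _ := rfl
  map_smul' _ _ := rfl

def LbK : VK k →ₗ[k] VK k where
  toFun f p := if p.2 = 1 then ξ ^ (p.1).val * f (p.1, 0) else 0
  map_add' f g := by
    funext p
    by_cases h : p.2 = 1 <;> simp [h, mul_add]
  map_smul' c f := by
    funext p
    by_cases h : p.2 = 1 <;> simp [h]
    ring

lemma zmod4_cases (x : ZMod 4) : x = 0 ∨ x = 1 ∨ x = 2 ∨ x = 3 := by revert x; decide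
lemma zmod2_cases (x : ZMod 2) : x = 0 ∨ x = 1 := by revert x; decide

lemma LaK_pow (m : ℕ) (f : VK k) (p : ZMod 4 × ZMod 2) :
    ((LaK k) ^ m) f p = f (p.1 - (m : ZMod 4), p.2) := by
  induction m generalizing f p with
  | zero => simp
  | succ n ih =>
    rw [pow_succ, Module.End.mul_apply, ih]
    show f (p.1 - n - 1, p.2) = _
    rw [sub_sub]
    push_cast
    rfl

lemma rel_a4K : (LaK k) ^ 4 = (1 : Module.End k (VK k)) := by
  apply LinearMap.ext; intro f; funext p
  rw [LaK_pow]
  rw [show ((4:ℕ) : ZMod 4) = 0 by decide, sub_zero]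
  rfl

lemma rel_b2K : (LbK k ξ) * (LbK k ξ) = (0 : Module.End k (VK k)) := by
  apply LinearMap.ext; intro f; funext p
  show (LbK k ξ) ((LbK k ξ) f) p = 0
  by_cases h : p.2 = 1 <;> simp [LbK, h]

lemma rel_baK (h4 : ξ ^ 4 = 1) :
    (LbK k ξ) * (LaK k) = ξ • ((LaK k) * (LbK k ξ)) := by
  apply LinearMap.ext; intro f; funext p
  show (LbK k ξ) ((LaK k) f) p = ξ * ((LaK k) ((LbK k ξ) f) p)
  by_cases h : p.2 = 1
  · simp only [LbK, LaK, LinearMap.coe_mk, AddHom.coe_mk, h, if_true, if_pos]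
    rw [← mul_assoc]
    congr 1
    rcases zmod4_cases p.1 with h1 | h1 | h1 | h1 <;> rw [h1]
    · rw [show ((0:ZMod 4) - 1) = 3 by decide, show (0:ZMod 4).val = 0 by decide,
        show (3:ZMod 4).val = 3 by decide, pow_zero]
      rw [← pow_succ']
      exact h4.symm
    · rw [show ((1:ZMod 4) - 1) = 0 by decide, show (1:ZMod 4).val = 1 by decide,
        show (0:ZMod 4).val = 0 by decide]
      ring
    · rw [show ((2:ZMod 4) - 1) = 1 by decide, show (2:ZMod 4).val = 2 by decide,
        show (1:ZMod 4).val = 1 by decide]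
      ring
    · rw [show ((3:ZMod 4) - 1) = 2 by decide, show (3:ZMod 4).val = 3 by decide,
        show (2:ZMod 4).val = 2 by decide]
      ring
  · simp [LbK, LaK, h]


def repGen : KGen → Module.End k (VK k)
  | .a => LaK k
  | .b => LbK k ξ

def repK (h4 : ξ ^ 4 = 1) : KAlg k ξ →ₐ[k] Module.End k (VK k) :=
  RingQuot.liftAlgHom k ⟨FreeAlgebra.lift k (repGen k ξ), by
    intro x y h
    rcases h with _ | _ | _
    · rw [map_pow, map_one, FreeAlgebra.lift_ι_apply]
      exact rel_a4K k
    · rw [map_pow, map_zero, FreeAlgebra.lift_ι_apply, pow_two]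
      exact rel_b2K k ξ
    · rw [map_mul, map_smul, map_mul, FreeAlgebra.lift_ι_apply, FreeAlgebra.lift_ι_apply]
      exact rel_baK k ξ h4⟩

lemma repK_a (h4 : ξ ^ 4 = 1) : repK k ξ h4 (aK k ξ) = LaK k := by
  rw [aK, repK, RingQuot.liftAlgHom_mkAlgHom_apply, FreeAlgebra.lift_ι_apply]
  rfl

lemma repK_b (h4 : ξ ^ 4 = 1) : repK k ξ h4 (bK k ξ) = LbK k ξ := by
  rw [bK, repK, RingQuot.liftAlgHom_mkAlgHom_apply, FreeAlgebra.lift_ι_apply]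
  rfl

def deltaK : VK k := fun p => if p = (0, 0) then 1 else 0

def coordK (h4 : ξ ^ 4 = 1) : KAlg k ξ →ₗ[k] VK k where
  toFun c := repK k ξ h4 c (deltaK k)
  map_add' x y := by simp only [map_add, LinearMap.add_apply]
  map_smul' c x := by simp only [map_smul, LinearMap.smul_apply, RingHom.id_apply]

lemma coordK_MA (h4 : ξ ^ 4 = 1) (i : ℕ) (p : ZMod 4 × ZMod 2) :
    coordK k ξ h4 (MK k ξ i 0) p = if p = ((i : ZMod 4), 0) then 1 else 0 := by
  show (repK k ξ h4 (MK k ξ i 0)) (deltaK k) p = _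
  rw [MK, pow_zero, mul_one, map_pow, repK_a, LaK_pow]
  simp only [deltaK, Prod.ext_iff, Prod.fst, Prod.snd, sub_eq_zero]

lemma LbK_delta : LbK k ξ (deltaK k) = fun p => if p = (0, 1) then 1 else 0 := by
  funext p
  show (if p.2 = 1 then ξ ^ (p.1).val * deltaK k (p.1, 0) else 0) = _
  rcases zmod2_cases p.2 with h2 | h2 <;> rcases zmod4_cases p.1 with h1 | h1 | h1 | h1 <;>
    simp +decide [deltaK, Prod.ext_iff, h2, h1]

lemma coordK_MB (h4 : ξ ^ 4 = 1) (i : ℕ) (p : ZMod 4 × ZMod 2) :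
    coordK k ξ h4 (MK k ξ i 1) p = if p = ((i : ZMod 4), 1) then 1 else 0 := by
  show (repK k ξ h4 (MK k ξ i 1)) (deltaK k) p = _
  rw [MK, pow_one, map_mul, map_pow, repK_a, repK_b, Module.End.mul_apply, LbK_delta, LaK_pow]
  simp only [Prod.ext_iff, Prod.fst, Prod.snd, sub_eq_zero]


def gK : Fin 4 × Fin 2 → KAlg k ξ := fun p => MK k ξ p.1.val p.2.val

def TK : Submodule k (KAlg k ξ) := Submodule.span k (Set.range (gK k ξ))

lemma MK_mem (i d : ℕ) : MK k ξ i d ∈ TK k ξ := by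
  -- first kill d ≥ 2
  rcases Nat.lt_or_ge d 2 with hd | hd
  · -- reduce i mod 4
    have key : ∀ n i : ℕ, i < 4 * n → MK k ξ i d ∈ TK k ξ := by
      intro n
      induction n with
      | zero => omega
      | succ m ih =>
        intro i hi
        rcases Nat.lt_or_ge i 4 with h4 | h4
        · refine Submodule.subset_span ⟨(⟨i, h4⟩, ⟨d, hd⟩), rfl⟩
        · obtain ⟨j, rfl⟩ : ∃ j, i = j + 4 := ⟨i - 4, by omega⟩
          rw [MK_a4]
          exact ih j (by omega)
    exact key (i + 1) i (by omega)
  · obtain ⟨e, rfl⟩ : ∃ e, d = e + 2 := ⟨d - 2, by omega⟩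
    rw [MK_b2]
    exact zero_mem _
lemma TK_mul : ∀ u ∈ TK k ξ, ∀ v ∈ TK k ξ, u * v ∈ TK k ξ := by
  intro u hu
  induction hu using Submodule.span_induction with
  | mem x hx =>
    intro v hv
    induction hv using Submodule.span_induction with
    | mem y hy =>
      obtain ⟨p, rfl⟩ := hx
      obtain ⟨q, rfl⟩ := hy
      rw [gK, gK, MK_mul]
      exact Submodule.smul_mem _ _ (MK_mem k ξ _ _)
    | zero => rw [mul_zero]; exact zero_mem _
    | add y z _ _ hy hz => rw [mul_add]; exact add_mem hy hz
    | smul c y _ hy => rw [mul_smul_comm]; exact Submodule.smul_mem _ _ hy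
  | zero => intro v hv; rw [zero_mul]; exact zero_mem _
  | add x y _ _ hx hy => intro v hv; rw [add_mul]; exact add_mem (hx v hv) (hy v hv)
  | smul c x _ hx => intro v hv; rw [smul_mul_assoc]; exact Submodule.smul_mem _ _ (hx v hv)

lemma TK_top (c : KAlg k ξ) : c ∈ TK k ξ := by
  obtain ⟨x, rfl⟩ := RingQuot.mkAlgHom_surjective k (KRel k ξ) c
  induction x using FreeAlgebra.induction with
  | grade0 r =>
    rw [AlgHom.commutes, Algebra.algebraMap_eq_smul_one]
    have : (1 : KAlg k ξ) = MK k ξ 0 0 := by rw [MK, pow_zero, pow_zero, mul_one]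
    rw [this]
    exact Submodule.smul_mem _ _ (MK_mem k ξ 0 0)
  | grade1 x =>
    cases x with
    | a =>
      have : RingQuot.mkAlgHom k (KRel k ξ) (FreeAlgebra.ι k KGen.a) = MK k ξ 1 0 := by
        rw [MK, pow_one, pow_zero, mul_one, aK]
      rw [this]; exact MK_mem k ξ 1 0
    | b =>
      have : RingQuot.mkAlgHom k (KRel k ξ) (FreeAlgebra.ι k KGen.b) = MK k ξ 0 1 := by
        rw [MK, pow_one, pow_zero, one_mul, bK]
      rw [this]; exact MK_mem k ξ 0 1
  | mul x y hx hy => rw [map_mul]; exact TK_mul k ξ _ hx _ hy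
  | add x y hx hy => rw [map_add]; exact add_mem hx hy

lemma KAlg_repr (c : KAlg k ξ) : ∃ f : Fin 4 × Fin 2 → k,
    c = f (0,0) • MK k ξ 0 0 + f (1,0) • MK k ξ 1 0 + f (2,0) • MK k ξ 2 0 +
      f (3,0) • MK k ξ 3 0 + f (0,1) • MK k ξ 0 1 + f (1,1) • MK k ξ 1 1 +
      f (2,1) • MK k ξ 2 1 + f (3,1) • MK k ξ 3 1 := by
  obtain ⟨f, hf⟩ := (Submodule.mem_span_range_iff_exists_fun k).mp (TK_top k ξ c)
  refine ⟨f, ?_⟩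
  rw [← hf, Fintype.sum_prod_type, Fin.sum_univ_four]
  simp only [Fin.sum_univ_two, gK]
  norm_num
  abel


lemma MT_mul (i d i' d' j e j' e' : ℕ) :
    (MK k ξ i d ⊗ₜ[k] MK k ξ i' d') * (MK k ξ j e ⊗ₜ[k] MK k ξ j' e')
      = (ξ ^ (d * j) * ξ ^ (d' * j')) •
        (MK k ξ (i + j) (d + e) ⊗ₜ[k] MK k ξ (i' + j') (d' + e')) := by
  rw [Algebra.TensorProduct.tmul_mul_tmul, MK_mul, MK_mul, TensorProduct.tmul_smul,
    ← TensorProduct.smul_tmul', smul_smul, mul_comm (ξ ^ (d' * j'))]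

lemma eM00 : MK k ξ 0 0 = 1 := by simp [MK]
lemma eM10 : MK k ξ 1 0 = aK k ξ := by simp [MK]
lemma eM20 : MK k ξ 2 0 = aK k ξ ^ 2 := by simp [MK]
lemma eM30 : MK k ξ 3 0 = aK k ξ ^ 3 := by simp [MK]
lemma eM01 : MK k ξ 0 1 = bK k ξ := by simp [MK]
lemma eM11 : MK k ξ 1 1 = aK k ξ * bK k ξ := by simp [MK]
lemma eM21 : MK k ξ 2 1 = aK k ξ ^ 2 * bK k ξ := by simp [MK]
lemma eM31 : MK k ξ 3 1 = aK k ξ ^ 3 * bK k ξ := by simp [MK]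

lemma MK12 (i : ℕ) : MK k ξ i 2 = 0 := MK_b2 k ξ i 0
lemma MK40 : MK k ξ 4 0 = MK k ξ 0 0 := MK_a4 k ξ 0 0
lemma MK50 : MK k ξ 5 0 = MK k ξ 1 0 := MK_a4 k ξ 1 0
lemma MK41 : MK k ξ 4 1 = MK k ξ 0 1 := MK_a4 k ξ 0 1
lemma MK51 : MK k ξ 5 1 = MK k ξ 1 1 := MK_a4 k ξ 1 1

section Delta
variable (hξ : IsPrimitiveRoot ξ 4) (Δ : KAlg k ξ →ₐ[k] KAlg k ξ ⊗[k] KAlg k ξ)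
  (hΔa : Δ (aK k ξ) = aK k ξ ⊗ₜ aK k ξ + ξ⁻¹ • (bK k ξ ⊗ₜ (bK k ξ * aK k ξ ^ 2)))
  (hΔb : Δ (bK k ξ) = bK k ξ ⊗ₜ (aK k ξ ^ 3) + aK k ξ ⊗ₜ bK k ξ)

lemma xi4 (hξ : IsPrimitiveRoot ξ 4) : ξ ^ 4 = 1 := hξ.pow_eq_one

lemma xi_ne (hξ : IsPrimitiveRoot ξ 4) : ξ ≠ 0 := by
  intro h
  have h4 := xi4 k ξ hξ
  rw [h] at h4
  norm_num at h4

lemma xi2 (hξ : IsPrimitiveRoot ξ 4) : ξ ^ 2 = -1 := by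
  have h4 := xi4 k ξ hξ
  have : ξ ^ 2 * ξ ^ 2 = 1 := by rw [← pow_add]; exact h4
  rcases mul_self_eq_one_iff.mp this with h | h
  · exact absurd h (hξ.pow_ne_one_of_pos_of_lt (by norm_num) (by norm_num))
  · exact h

lemma xixi (hξ : IsPrimitiveRoot ξ 4) : ξ * ξ = -1 := by
  have := xi2 k ξ hξ
  rwa [pow_two] at this

include hξ hΔa hΔb in
lemma D10 : Δ (MK k ξ 1 0) = MK k ξ 1 0 ⊗ₜ MK k ξ 1 0 + ξ • (MK k ξ 0 1 ⊗ₜ MK k ξ 2 1) := by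
  have hne := xi_ne k ξ hξ
  have h1 : bK k ξ * aK k ξ ^ 2 = (ξ * ξ) • (aK k ξ ^ 2 * bK k ξ) := by
    rw [MK_comm k ξ 2, pow_two ξ]
  have hs : ξ⁻¹ * -1 = ξ := by
    field_simp
    linear_combination - xixi k ξ hξ
  rw [eM10, eM01, eM21, hΔa, h1]
  rw [TensorProduct.tmul_smul, smul_smul, xixi k ξ hξ, hs]

include hξ hΔa hΔb in
lemma D20 : Δ (MK k ξ 2 0) = MK k ξ 2 0 ⊗ₜ MK k ξ 2 0 := by
  have hm : Δ (MK k ξ 2 0) = Δ (MK k ξ 1 0) * Δ (MK k ξ 1 0) := by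
    rw [← map_mul]; congr 1; simp [MK_mul]
  rw [hm, D10 k ξ hξ Δ hΔa hΔb]
  simp only [mul_add, add_mul, smul_add, smul_mul_assoc, mul_smul_comm, MT_mul, smul_smul]
  norm_num [xi2 k ξ hξ, xixi k ξ hξ, MK12, TensorProduct.tmul_zero, TensorProduct.zero_tmul,
    smul_zero]
  simp only [add_assoc, ← add_smul, neg_add_cancel, zero_smul, add_zero]

include hξ hΔa hΔb in
lemma D30 : Δ (MK k ξ 3 0)
    = MK k ξ 3 0 ⊗ₜ MK k ξ 3 0 + ξ • (MK k ξ 2 1 ⊗ₜ MK k ξ 0 1) := by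
  have hm : Δ (MK k ξ 3 0) = Δ (MK k ξ 2 0) * Δ (MK k ξ 1 0) := by
    rw [← map_mul]; congr 1; simp [MK_mul]
  rw [hm, D20 k ξ hξ Δ hΔa hΔb, D10 k ξ hξ Δ hΔa hΔb]
  simp only [mul_add, add_mul, smul_add, smul_mul_assoc, mul_smul_comm, MT_mul, smul_smul]
  norm_num [xi2 k ξ hξ, xixi k ξ hξ, MK12, MK40, MK41, MK50, MK51, TensorProduct.tmul_zero,
    TensorProduct.zero_tmul, smul_zero]

include hξ hΔa hΔb in
lemma D01 : Δ (MK k ξ 0 1) = MK k ξ 0 1 ⊗ₜ MK k ξ 3 0 + MK k ξ 1 0 ⊗ₜ MK k ξ 0 1 := by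
  rw [eM01, hΔb, ← eM30, ← eM10, ← eM01]

include hξ hΔa hΔb in
lemma D11 : Δ (MK k ξ 1 1) = MK k ξ 1 1 ⊗ₜ MK k ξ 0 0 + MK k ξ 2 0 ⊗ₜ MK k ξ 1 1 := by
  have hm : Δ (MK k ξ 1 1) = Δ (MK k ξ 1 0) * Δ (MK k ξ 0 1) := by
    rw [← map_mul]; congr 1; simp [MK_mul]
  rw [hm, D10 k ξ hξ Δ hΔa hΔb, D01 k ξ hξ Δ hΔa hΔb]
  simp only [mul_add, add_mul, smul_add, smul_mul_assoc, mul_smul_comm, MT_mul, smul_smul]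
  norm_num [xi2 k ξ hξ, xixi k ξ hξ, MK12, MK40, MK41, MK50, MK51, TensorProduct.tmul_zero,
    TensorProduct.zero_tmul, smul_zero]

include hξ hΔa hΔb in
lemma D21 : Δ (MK k ξ 2 1) = MK k ξ 2 1 ⊗ₜ MK k ξ 1 0 + MK k ξ 3 0 ⊗ₜ MK k ξ 2 1 := by
  have hm : Δ (MK k ξ 2 1) = Δ (MK k ξ 2 0) * Δ (MK k ξ 0 1) := by
    rw [← map_mul]; congr 1; simp [MK_mul]
  rw [hm, D20 k ξ hξ Δ hΔa hΔb, D01 k ξ hξ Δ hΔa hΔb]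
  simp only [mul_add, add_mul, smul_add, smul_mul_assoc, mul_smul_comm, MT_mul, smul_smul]
  norm_num [xi2 k ξ hξ, xixi k ξ hξ, MK12, MK40, MK41, MK50, MK51, TensorProduct.tmul_zero,
    TensorProduct.zero_tmul, smul_zero]

include hξ hΔa hΔb in
lemma D31 : Δ (MK k ξ 3 1) = MK k ξ 3 1 ⊗ₜ MK k ξ 2 0 + MK k ξ 0 0 ⊗ₜ MK k ξ 3 1 := by
  have hm : Δ (MK k ξ 3 1) = Δ (MK k ξ 2 0) * Δ (MK k ξ 1 1) := by
    rw [← map_mul]; congr 1; simp [MK_mul]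
  rw [hm, D20 k ξ hξ Δ hΔa hΔb, D11 k ξ hξ Δ hΔa hΔb]
  simp only [mul_add, add_mul, smul_add, smul_mul_assoc, mul_smul_comm, MT_mul, smul_smul]
  norm_num [xi2 k ξ hξ, xixi k ξ hξ, MK12, MK40, MK41, MK50, MK51, TensorProduct.tmul_zero,
    TensorProduct.zero_tmul, smul_zero]

include hξ hΔa hΔb in
lemma D00 : Δ (MK k ξ 0 0) = MK k ξ 0 0 ⊗ₜ MK k ξ 0 0 := by
  rw [eM00, map_one, Algebra.TensorProduct.one_def]

end Delta

def phiK (h4 : ξ ^ 4 = 1) (p q : ZMod 4 × ZMod 2) : (KAlg k ξ ⊗[k] KAlg k ξ) →ₗ[k] k :=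
  (TensorProduct.lid k k).toLinearMap ∘ₗ
    TensorProduct.map ((LinearMap.proj p).comp (coordK k ξ h4))
      ((LinearMap.proj q).comp (coordK k ξ h4))

lemma phiK_tmul (h4 : ξ ^ 4 = 1) (p q : ZMod 4 × ZMod 2) (u v : KAlg k ξ) :
    phiK k ξ h4 p q (u ⊗ₜ v) = coordK k ξ h4 u p * coordK k ξ h4 v q := by
  simp [phiK, TensorProduct.map_tmul, TensorProduct.lid_tmul, smul_eq_mul]

end

set_option maxHeartbeats 2000000 in
/-- An element `c` of `K` is group-like (`c ≠ 0` and `Δ(c) = c ⊗ c`) if and only if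
`c = 1` or `c = a²`; in particular `K` has exactly two group-like elements. Here `Δ`
is the comultiplication of `K`, i.e. the algebra map determined by
`Δ(a) = a⊗a + ξ⁻¹·b⊗ba²` and `Δ(b) = b⊗a³ + a⊗b`. -/
theorem stmt_2 (k : Type) [Field k] [IsAlgClosed k] [CharZero k] (ξ : k)
    (hξ : IsPrimitiveRoot ξ 4)
    (Δ : KAlg k ξ →ₐ[k] KAlg k ξ ⊗[k] KAlg k ξ)
    (hΔa : Δ (aK k ξ) = aK k ξ ⊗ₜ aK k ξ + ξ⁻¹ • (bK k ξ ⊗ₜ (bK k ξ * aK k ξ ^ 2)))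
    (hΔb : Δ (bK k ξ) = bK k ξ ⊗ₜ (aK k ξ ^ 3) + aK k ξ ⊗ₜ bK k ξ) :
    (∀ c : KAlg k ξ, (c ≠ 0 ∧ Δ c = c ⊗ₜ c) ↔ (c = 1 ∨ c = aK k ξ ^ 2)) ∧
    Set.ncard {c : KAlg k ξ | c ≠ 0 ∧ Δ c = c ⊗ₜ c} = 2 := by
  have h4 : ξ ^ 4 = 1 := hξ.pow_eq_one
  have hne : ξ ≠ 0 := xi_ne k ξ hξ
  -- basic coordinate facts
  have hC1 : coordK k ξ h4 1 ((0:ZMod 4), (0:ZMod 2)) = 1 := by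
    rw [← eM00 k ξ, coordK_MA]
    norm_num
  have hCa2 : coordK k ξ h4 (aK k ξ ^ 2) ((2:ZMod 4), (0:ZMod 2)) = 1 := by
    rw [← eM20 k ξ, coordK_MA]
    norm_num
  have hCa2' : coordK k ξ h4 (aK k ξ ^ 2) ((0:ZMod 4), (0:ZMod 2)) = 0 := by
    rw [← eM20 k ξ, coordK_MA]
    simp +decide [Prod.ext_iff]
  have h10 : (1 : KAlg k ξ) ≠ 0 := by
    intro h
    rw [h, map_zero] at hC1
    simp at hC1
  have ha2ne : aK k ξ ^ 2 ≠ 0 := by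
    intro h
    rw [h, map_zero] at hCa2
    simp at hCa2
  have hne12 : (1 : KAlg k ξ) ≠ aK k ξ ^ 2 := by
    intro h
    rw [← h] at hCa2'
    rw [hC1] at hCa2'
    exact one_ne_zero hCa2'
  have main : ∀ c : KAlg k ξ, c ≠ 0 → Δ c = c ⊗ₜ c → c = 1 ∨ c = aK k ξ ^ 2 := by
    intro c hc0 hgl
    obtain ⟨f, hc⟩ := KAlg_repr k ξ c
    have key : ∀ p q : ZMod 4 × ZMod 2,
        phiK k ξ h4 p q (Δ c) = coordK k ξ h4 c p * coordK k ξ h4 c q := by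
      intro p q
      rw [hgl, phiK_tmul]
    have hΔc : Δ c =
        f (0,0) • (MK k ξ 0 0 ⊗ₜ MK k ξ 0 0)
      + f (1,0) • (MK k ξ 1 0 ⊗ₜ MK k ξ 1 0 + ξ • (MK k ξ 0 1 ⊗ₜ MK k ξ 2 1))
      + f (2,0) • (MK k ξ 2 0 ⊗ₜ MK k ξ 2 0)
      + f (3,0) • (MK k ξ 3 0 ⊗ₜ MK k ξ 3 0 + ξ • (MK k ξ 2 1 ⊗ₜ MK k ξ 0 1))
      + f (0,1) • (MK k ξ 0 1 ⊗ₜ MK k ξ 3 0 + MK k ξ 1 0 ⊗ₜ MK k ξ 0 1)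
      + f (1,1) • (MK k ξ 1 1 ⊗ₜ MK k ξ 0 0 + MK k ξ 2 0 ⊗ₜ MK k ξ 1 1)
      + f (2,1) • (MK k ξ 2 1 ⊗ₜ MK k ξ 1 0 + MK k ξ 3 0 ⊗ₜ MK k ξ 2 1)
      + f (3,1) • (MK k ξ 3 1 ⊗ₜ MK k ξ 2 0 + MK k ξ 0 0 ⊗ₜ MK k ξ 3 1) := by
      rw [hc]
      simp only [map_add, map_smul]
      rw [D00 k ξ hξ Δ hΔa hΔb, D10 k ξ hξ Δ hΔa hΔb, D20 k ξ hξ Δ hΔa hΔb,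
        D30 k ξ hξ Δ hΔa hΔb, D01 k ξ hξ Δ hΔa hΔb, D11 k ξ hξ Δ hΔa hΔb,
        D21 k ξ hξ Δ hΔa hΔb, D31 k ξ hξ Δ hΔa hΔb]
    -- coordinates of c
    have ccv : ∀ p : ZMod 4 × ZMod 2, coordK k ξ h4 c p =
        f (0,0) * (if p = ((0:ZMod 4),(0:ZMod 2)) then 1 else 0)
      + f (1,0) * (if p = ((1:ZMod 4),(0:ZMod 2)) then 1 else 0)
      + f (2,0) * (if p = ((2:ZMod 4),(0:ZMod 2)) then 1 else 0)
      + f (3,0) * (if p = ((3:ZMod 4),(0:ZMod 2)) then 1 else 0)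
      + f (0,1) * (if p = ((0:ZMod 4),(1:ZMod 2)) then 1 else 0)
      + f (1,1) * (if p = ((1:ZMod 4),(1:ZMod 2)) then 1 else 0)
      + f (2,1) * (if p = ((2:ZMod 4),(1:ZMod 2)) then 1 else 0)
      + f (3,1) * (if p = ((3:ZMod 4),(1:ZMod 2)) then 1 else 0) := by
      intro p
      rw [hc]
      simp only [map_add, map_smul, Pi.add_apply, Pi.smul_apply, smul_eq_mul,
        coordK_MA, coordK_MB]
      norm_num
    have e00 : coordK k ξ h4 c ((0:ZMod 4),(0:ZMod 2)) = f (0,0) := by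
      rw [ccv]; simp +decide [Prod.ext_iff]
    have e20 : coordK k ξ h4 c ((2:ZMod 4),(0:ZMod 2)) = f (2,0) := by
      rw [ccv]; simp +decide [Prod.ext_iff]
    have e01 : coordK k ξ h4 c ((0:ZMod 4),(1:ZMod 2)) = f (0,1) := by
      rw [ccv]; simp +decide [Prod.ext_iff]
    have e11 : coordK k ξ h4 c ((1:ZMod 4),(1:ZMod 2)) = f (1,1) := by
      rw [ccv]; simp +decide [Prod.ext_iff]
    have e21 : coordK k ξ h4 c ((2:ZMod 4),(1:ZMod 2)) = f (2,1) := by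
      rw [ccv]; simp +decide [Prod.ext_iff]
    have e31 : coordK k ξ h4 c ((3:ZMod 4),(1:ZMod 2)) = f (3,1) := by
      rw [ccv]; simp +decide [Prod.ext_iff]
    -- the equations
    have mkeq : ∀ p q : ZMod 4 × ZMod 2, phiK k ξ h4 p q (
        f (0,0) • (MK k ξ 0 0 ⊗ₜ MK k ξ 0 0)
      + f (1,0) • (MK k ξ 1 0 ⊗ₜ MK k ξ 1 0 + ξ • (MK k ξ 0 1 ⊗ₜ MK k ξ 2 1))
      + f (2,0) • (MK k ξ 2 0 ⊗ₜ MK k ξ 2 0)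
      + f (3,0) • (MK k ξ 3 0 ⊗ₜ MK k ξ 3 0 + ξ • (MK k ξ 2 1 ⊗ₜ MK k ξ 0 1))
      + f (0,1) • (MK k ξ 0 1 ⊗ₜ MK k ξ 3 0 + MK k ξ 1 0 ⊗ₜ MK k ξ 0 1)
      + f (1,1) • (MK k ξ 1 1 ⊗ₜ MK k ξ 0 0 + MK k ξ 2 0 ⊗ₜ MK k ξ 1 1)
      + f (2,1) • (MK k ξ 2 1 ⊗ₜ MK k ξ 1 0 + MK k ξ 3 0 ⊗ₜ MK k ξ 2 1)
      + f (3,1) • (MK k ξ 3 1 ⊗ₜ MK k ξ 2 0 + MK k ξ 0 0 ⊗ₜ MK k ξ 3 1))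
        = coordK k ξ h4 c p * coordK k ξ h4 c q := by
      intro p q
      rw [← hΔc]
      exact key p q
    have E01 := mkeq ((0:ZMod 4),(1:ZMod 2)) ((0:ZMod 4),(1:ZMod 2))
    rw [e01] at E01
    simp +decide [map_add, map_smul, phiK_tmul, coordK_MA, coordK_MB, smul_eq_mul,
      Prod.ext_iff] at E01
    have E11 := mkeq ((1:ZMod 4),(1:ZMod 2)) ((1:ZMod 4),(1:ZMod 2))
    rw [e11] at E11
    simp +decide [map_add, map_smul, phiK_tmul, coordK_MA, coordK_MB, smul_eq_mul,
      Prod.ext_iff] at E11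
    have E21 := mkeq ((2:ZMod 4),(1:ZMod 2)) ((2:ZMod 4),(1:ZMod 2))
    rw [e21] at E21
    simp +decide [map_add, map_smul, phiK_tmul, coordK_MA, coordK_MB, smul_eq_mul,
      Prod.ext_iff] at E21
    have E31 := mkeq ((3:ZMod 4),(1:ZMod 2)) ((3:ZMod 4),(1:ZMod 2))
    rw [e31] at E31
    simp +decide [map_add, map_smul, phiK_tmul, coordK_MA, coordK_MB, smul_eq_mul,
      Prod.ext_iff] at E31
    have E10 := mkeq ((0:ZMod 4),(1:ZMod 2)) ((2:ZMod 4),(1:ZMod 2))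
    rw [e01, e21, E01, E21] at E10
    simp +decide [map_add, map_smul, phiK_tmul, coordK_MA, coordK_MB, smul_eq_mul,
      Prod.ext_iff, hne] at E10
    have E30 := mkeq ((2:ZMod 4),(1:ZMod 2)) ((0:ZMod 4),(1:ZMod 2))
    rw [e01, e21, E01, E21] at E30
    simp +decide [map_add, map_smul, phiK_tmul, coordK_MA, coordK_MB, smul_eq_mul,
      Prod.ext_iff, hne] at E30
    have E00 := mkeq ((0:ZMod 4),(0:ZMod 2)) ((0:ZMod 4),(0:ZMod 2))
    rw [e00] at E00
    simp +decide [map_add, map_smul, phiK_tmul, coordK_MA, coordK_MB, smul_eq_mul,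
      Prod.ext_iff] at E00
    have E20 := mkeq ((2:ZMod 4),(0:ZMod 2)) ((2:ZMod 4),(0:ZMod 2))
    rw [e20] at E20
    simp +decide [map_add, map_smul, phiK_tmul, coordK_MA, coordK_MB, smul_eq_mul,
      Prod.ext_iff] at E20
    have E0020 := mkeq ((0:ZMod 4),(0:ZMod 2)) ((2:ZMod 4),(0:ZMod 2))
    rw [e00, e20] at E0020
    simp +decide [map_add, map_smul, phiK_tmul, coordK_MA, coordK_MB, smul_eq_mul,
      Prod.ext_iff] at E0020
    have E11' : f (1,1) = 0 := E11
    have E00' : f (0,0) = f (0,0) * f (0,0) := E00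
    have hc' : c = f (0,0) • (1 : KAlg k ξ) + f (2,0) • (aK k ξ ^ 2) := by
      rw [hc]
      simp only [E01, E11', E21, E31, E10, E30, zero_smul, add_zero, zero_add,
        eM00, eM20]
    rcases E0020 with h0 | h2
    · right
      have h0' : f (0,0) = 0 := h0
      have hf20 : f (2,0) ≠ 0 := by
        intro h
        apply hc0
        rw [hc', h0', h]
        simp
      have hone : f (2,0) = 1 := by
        have h1 : f (2,0) * 1 = f (2,0) * f (2,0) := by rw [mul_one]; exact E20
        exact (mul_left_cancel₀ hf20 h1).symm
      rw [hc', h0', hone]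
      simp
    · left
      have hf00 : f (0,0) ≠ 0 := by
        intro h
        apply hc0
        rw [hc', h, h2]
        simp
      have hone : f (0,0) = 1 := by
        have h1 : f (0,0) * 1 = f (0,0) * f (0,0) := by rw [mul_one]; exact E00'
        exact (mul_left_cancel₀ hf00 h1).symm
      rw [hc', h2, hone]
      simp
  have part1 : ∀ c : KAlg k ξ, (c ≠ 0 ∧ Δ c = c ⊗ₜ c) ↔ (c = 1 ∨ c = aK k ξ ^ 2) := by
    intro c
    constructor
    · rintro ⟨hc0, hgl⟩
      exact main c hc0 hgl
    · rintro (rfl | rfl)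
      · refine ⟨h10, ?_⟩
        rw [map_one, Algebra.TensorProduct.one_def]
      · refine ⟨ha2ne, ?_⟩
        have := D20 k ξ hξ Δ hΔa hΔb
        rwa [eM20] at this
  refine ⟨part1, ?_⟩
  have hset : {c : KAlg k ξ | c ≠ 0 ∧ Δ c = c ⊗ₜ c} = {1, aK k ξ ^ 2} := by
    ext c
    rw [Set.mem_setOf_eq, part1 c]
    simp [Set.mem_insert_iff]
  rw [hset]
  exact Set.ncard_pair hne12
end

section
/- For each pair (i, j) ∈ Λ, the assignments sending a to the matrix diag(ξ^i, ξ^{i+1}), b to the matrix with (1,2)-entry 1 and all other entries 0, g to diag(ξ^j, −ξ^j), and x to the matrix with (1,2)-entry θ^{-1}ξ^{1−i}((−1)^i + ξ^j), (2,1)-entry θξ^{i−1}((−1)^i − ξ^j) and zeros on the diagonal, define a left D-module structure V_{i,j} on k^2. Each V_{i,j} is a simple D-module, and V_{i,j} ≅ V_{k,l} as D-modules implies (i,j) = (k,l). -/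
open TensorProduct

noncomputable section

/-- Generators of the Drinfeld double `D = D(K^cop)`. -/
inductive DGen : Type
  | a | b | g | x

variable (k : Type) [Field k] (ξ θ : k)

namespace DGen

/-- Shorthand for the generator `a` of the free algebra. -/
abbrev A : FreeAlgebra k DGen := FreeAlgebra.ι k DGen.a
/-- Shorthand for the generator `b` of the free algebra. -/
abbrev B : FreeAlgebra k DGen := FreeAlgebra.ι k DGen.b
/-- Shorthand for the generator `g` of the free algebra. -/
abbrev G : FreeAlgebra k DGen := FreeAlgebra.ι k DGen.g
/-- Shorthand for the generator `x` of the free algebra. -/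
abbrev X : FreeAlgebra k DGen := FreeAlgebra.ι k DGen.x

end DGen

open DGen

/-- The defining relations of the Drinfeld double `D`. -/
inductive DRel : FreeAlgebra k DGen → FreeAlgebra k DGen → Prop
  | a4 : DRel (A k ^ 4) 1
  | b2 : DRel (B k ^ 2) 0
  | ba : DRel (B k * A k) (ξ • (A k * B k))
  | g4 : DRel (G k ^ 4) 1
  | x2 : DRel (X k ^ 2) (1 - G k ^ 2)
  | gx : DRel (G k * X k) (-(X k * G k))
  | ag : DRel (A k * G k) (G k * A k)
  | ax : DRel (A k * X k - ξ • (X k * A k)) (-(θ • (B k * A k ^ 2 - G k * B k)))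
  | bg : DRel (B k * G k) (-(G k * B k))
  | bx : DRel (B k * X k - ξ • (X k * B k)) ((θ * ξ ^ 3) • (A k ^ 3 - G k * A k))

/-- The Drinfeld double `D = D(K^cop)` as an algebra. -/
abbrev DAlg : Type := RingQuot (DRel k ξ θ)

/-- The image of the generator `a` in `D`. -/
def aD : DAlg k ξ θ := RingQuot.mkAlgHom k (DRel k ξ θ) (A k)
/-- The image of the generator `b` in `D`. -/
def bD : DAlg k ξ θ := RingQuot.mkAlgHom k (DRel k ξ θ) (B k)
/-- The image of the generator `g` in `D`. -/
def gD : DAlg k ξ θ := RingQuot.mkAlgHom k (DRel k ξ θ) (G k)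
/-- The image of the generator `x` in `D`. -/
def xD : DAlg k ξ θ := RingQuot.mkAlgHom k (DRel k ξ θ) (X k)

/-- The matrix by which `a` acts on `V_{i,j}`. -/
def Ma (i : Fin 4) : Matrix (Fin 2) (Fin 2) k :=
  !![ξ ^ (i : ℕ), 0; 0, ξ ^ ((i : ℕ) + 1)]

/-- The matrix by which `b` acts on `V_{i,j}`. -/
def Mb : Matrix (Fin 2) (Fin 2) k := !![0, 1; 0, 0]

/-- The matrix by which `g` acts on `V_{i,j}`. -/
def Mg (j : Fin 4) : Matrix (Fin 2) (Fin 2) k :=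
  !![ξ ^ (j : ℕ), 0; 0, -ξ ^ (j : ℕ)]

/-- The matrix by which `x` acts on `V_{i,j}`. -/
def Mx (i j : Fin 4) : Matrix (Fin 2) (Fin 2) k :=
  !![0, θ⁻¹ * ξ ^ ((1 : ℤ) - (i : ℕ)) * ((-1 : k) ^ (i : ℕ) + ξ ^ (j : ℕ));
     θ * ξ ^ (((i : ℕ) : ℤ) - 1) * ((-1 : k) ^ (i : ℕ) - ξ ^ (j : ℕ)), 0]

/-- `ρ` is the representation of `D` on `k²` corresponding to `V_{i,j}`. -/
def IsRepV (i j : Fin 4) (ρ : DAlg k ξ θ →ₐ[k] Matrix (Fin 2) (Fin 2) k) : Prop :=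
  ρ (aD k ξ θ) = Ma k ξ i ∧ ρ (bD k ξ θ) = Mb k ∧
  ρ (gD k ξ θ) = Mg k ξ j ∧ ρ (xD k ξ θ) = Mx k ξ θ i j

/-! ### Auxiliary lemmas -/

section Aux

variable {k₀ : Type} [Field k₀] (α γ p q ζ τ d : k₀)

lemma rel1' (hd : d = α*ζ) (hα4 : α^4 = 1) (hξ2 : ζ^2 = -1) :
    (!![α,0;0,d] : Matrix (Fin 2) (Fin 2) k₀)^4 = 1 := by
  subst hd; ext a b; fin_cases a <;> fin_cases b <;>
    simp [pow_succ, Matrix.mul_apply, Fin.sum_univ_two]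
  · linear_combination hα4
  · linear_combination ζ^4*hα4 + (ζ^2-1)*hξ2

lemma rel2' : (!![0,1;0,0] : Matrix (Fin 2) (Fin 2) k₀)^2 = 0 := by
  ext a b; fin_cases a <;> fin_cases b <;>
    simp [pow_succ, Matrix.mul_apply, Fin.sum_univ_two]

lemma rel3' (hd : d = α*ζ) : (!![0,1;0,0] : Matrix (Fin 2) (Fin 2) k₀) * !![α,0;0,d]
    = ζ • (!![α,0;0,d] * !![0,1;0,0]) := by
  subst hd; ext a b; fin_cases a <;> fin_cases b <;>
    simp [Matrix.mul_apply, Fin.sum_univ_two] <;> ring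

lemma rel4' (hγ4 : γ^4 = 1) : (!![γ,0;0,-γ] : Matrix (Fin 2) (Fin 2) k₀)^4 = 1 := by
  ext a b; fin_cases a <;> fin_cases b <;>
    simp [pow_succ, Matrix.mul_apply, Fin.sum_univ_two] <;>
    linear_combination hγ4

lemma rel5' (hpq : p*q = 1 - γ^2) :
    (!![0,p;q,0] : Matrix (Fin 2) (Fin 2) k₀)^2 = 1 - (!![γ,0;0,-γ])^2 := by
  ext a b; fin_cases a <;> fin_cases b <;>
    simp [pow_succ, Matrix.mul_apply, Fin.sum_univ_two] <;>
    linear_combination hpq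

lemma rel6' : (!![γ,0;0,-γ] : Matrix (Fin 2) (Fin 2) k₀) * !![0,p;q,0]
    = -(!![0,p;q,0] * !![γ,0;0,-γ]) := by
  ext a b; fin_cases a <;> fin_cases b <;>
    simp [Matrix.mul_apply, Fin.sum_univ_two] <;> ring

lemma rel7' : (!![α,0;0,d] : Matrix (Fin 2) (Fin 2) k₀) * !![γ,0;0,-γ]
    = !![γ,0;0,-γ] * !![α,0;0,d] := by
  ext a b; fin_cases a <;> fin_cases b <;>
    simp [Matrix.mul_apply, Fin.sum_univ_two] <;> ring

lemma rel8' (hd : d = α*ζ) (hξ2 : ζ^2 = -1) (h2p : 2*α*p = τ*(α^2+γ)) :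
    (!![α,0;0,d] : Matrix (Fin 2) (Fin 2) k₀) * !![0,p;q,0]
      - ζ • (!![0,p;q,0] * !![α,0;0,d])
    = -(τ • (!![0,1;0,0] * (!![α,0;0,d])^2 - !![γ,0;0,-γ] * !![0,1;0,0])) := by
  subst hd; ext a b; fin_cases a <;> fin_cases b <;>
    simp [pow_succ, Matrix.mul_apply, Fin.sum_univ_two]
  · linear_combination h2p + (τ*α^2 - α*p)*hξ2
  · ring

lemma rel9' : (!![0,1;0,0] : Matrix (Fin 2) (Fin 2) k₀) * !![γ,0;0,-γ]
    = -(!![γ,0;0,-γ] * !![0,1;0,0]) := by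
  ext a b; fin_cases a <;> fin_cases b <;>
    simp [Matrix.mul_apply, Fin.sum_univ_two]

lemma rel10' (hd : d = α*ζ) (hξ2 : ζ^2 = -1) (hq : q = τ*ζ^3*(α^3 - γ*α)) :
    (!![0,1;0,0] : Matrix (Fin 2) (Fin 2) k₀) * !![0,p;q,0]
      - ζ • (!![0,p;q,0] * !![0,1;0,0])
    = (τ * ζ^3) • ((!![α,0;0,d])^3 - !![γ,0;0,-γ] * !![α,0;0,d]) := by
  subst hd; ext a b; fin_cases a <;> fin_cases b <;>
    simp [pow_succ, Matrix.mul_apply, Fin.sum_univ_two]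
  · linear_combination hq
  · linear_combination (-ζ)*hq + (-(τ*ζ^4*α^3))*hξ2

end Aux

/-- The generator-to-matrix assignment for `V_{i,j}`. -/
def Mgen (i j : Fin 4) : DGen → Matrix (Fin 2) (Fin 2) k
  | .a => Ma k ξ i
  | .b => Mb k
  | .g => Mg k ξ j
  | .x => Mx k ξ θ i j

lemma liftRel [CharZero k] (hξ : IsPrimitiveRoot ξ 4) (hθ2 : θ ^ 2 = 2 * ξ) (i j : Fin 4) :
    ∀ ⦃u v : FreeAlgebra k DGen⦄, DRel k ξ θ u v →
      FreeAlgebra.lift k (Mgen k ξ θ i j) u = FreeAlgebra.lift k (Mgen k ξ θ i j) v := by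
  have hξ0 : ξ ≠ 0 := hξ.ne_zero (by norm_num)
  have hξ4 : ξ^4 = 1 := hξ.pow_eq_one
  have hξ2 : ξ^2 = -1 := by
    have h2 : ξ^2 ≠ 1 := hξ.pow_ne_one_of_pos_of_lt (by norm_num) (by norm_num)
    have h : (ξ^2 - 1) * (ξ^2 + 1) = 0 := by linear_combination hξ4
    rcases mul_eq_zero.1 h with h | h
    · exact absurd (sub_eq_zero.1 h) h2
    · linear_combination h
  have hθ0 : θ ≠ 0 := by
    intro h
    exact (mul_ne_zero two_ne_zero hξ0) (by rw [← hθ2, h]; ring)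
  have hα0 : ξ^(i:ℕ) ≠ 0 := pow_ne_zero _ hξ0
  have hα4 : (ξ^(i:ℕ))^4 = 1 := by rw [← pow_mul, Nat.mul_comm, pow_mul, hξ4, one_pow]
  have hγ4 : (ξ^(j:ℕ))^4 = 1 := by rw [← pow_mul, Nat.mul_comm, pow_mul, hξ4, one_pow]
  have hinv : θ⁻¹ = θ*ξ^3/2 :=
    inv_eq_of_mul_eq_one_left (by linear_combination (ξ^3/2)*hθ2 + hξ4)
  have hz1 : ξ ^ ((1 : ℤ) - (i : ℕ)) = ξ * (ξ^(i:ℕ))^3 := by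
    rw [zpow_sub₀ hξ0, zpow_one, zpow_natCast, div_eq_mul_inv,
      inv_eq_of_mul_eq_one_left (show (ξ^(i:ℕ))^3 * ξ^(i:ℕ) = 1 by linear_combination hα4)]
  have hz2 : ξ ^ (((i : ℕ) : ℤ) - 1) = ξ^(i:ℕ) * ξ^3 := by
    rw [zpow_sub₀ hξ0, zpow_one, zpow_natCast, div_eq_mul_inv,
      inv_eq_of_mul_eq_one_left (show ξ^3 * ξ = 1 by linear_combination hξ4)]
  have hm1 : (-1 : k) ^ (i : ℕ) = (ξ^(i:ℕ))^2 := by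
    rw [← hξ2, ← pow_mul, ← pow_mul, Nat.mul_comm]
  have hpq : (θ⁻¹ * ξ ^ ((1 : ℤ) - (i : ℕ)) * ((-1 : k) ^ (i : ℕ) + ξ^(j:ℕ))) *
      (θ * ξ ^ (((i : ℕ) : ℤ) - 1) * ((-1 : k) ^ (i : ℕ) - ξ^(j:ℕ)))
      = 1 - (ξ^(j:ℕ))^2 := by
    rw [hz1, hz2, hm1, hinv]
    linear_combination (ξ^7*(ξ^(i:ℕ))^4*((ξ^(i:ℕ))^4-(ξ^(j:ℕ))^2)/2)*hθ2
      + ((ξ^(i:ℕ))^4*((ξ^(i:ℕ))^4-(ξ^(j:ℕ))^2)*(ξ^6-ξ^4+ξ^2-1))*hξ2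
      + ((ξ^(i:ℕ))^4-(ξ^(j:ℕ))^2+1)*hα4
  have h2p : 2*(ξ^(i:ℕ))*(θ⁻¹ * ξ ^ ((1 : ℤ) - (i : ℕ)) * ((-1 : k) ^ (i : ℕ) + ξ^(j:ℕ)))
      = θ*((ξ^(i:ℕ))^2+ξ^(j:ℕ)) := by
    rw [hz1, hm1, hinv]
    linear_combination θ*((ξ^(i:ℕ))^2+ξ^(j:ℕ))*(ξ^(i:ℕ))^4*hξ4
      + θ*((ξ^(i:ℕ))^2+ξ^(j:ℕ))*hα4
  have hq : (θ * ξ ^ (((i : ℕ) : ℤ) - 1) * ((-1 : k) ^ (i : ℕ) - ξ^(j:ℕ)))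
      = θ*ξ^3*((ξ^(i:ℕ))^3 - ξ^(j:ℕ)*ξ^(i:ℕ)) := by
    rw [hz2, hm1]; ring
  have hd : ξ^((i:ℕ)+1) = ξ^(i:ℕ) * ξ := pow_succ ξ _
  intro u v h
  induction h with
  | a4 => simp only [map_pow, map_one, FreeAlgebra.lift_ι_apply, Mgen, Ma]
          exact rel1' _ _ _ hd hα4 hξ2
  | b2 => simp only [map_pow, map_zero, FreeAlgebra.lift_ι_apply, Mgen, Mb]
          exact rel2'
  | ba => simp only [map_mul, map_smul, FreeAlgebra.lift_ι_apply, Mgen, Ma, Mb]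
          exact rel3' _ _ _ hd
  | g4 => simp only [map_pow, map_one, FreeAlgebra.lift_ι_apply, Mgen, Mg]
          exact rel4' _ hγ4
  | x2 => simp only [map_pow, map_sub, map_one, FreeAlgebra.lift_ι_apply, Mgen, Mg, Mx]
          exact rel5' _ _ _ hpq
  | gx => simp only [map_mul, map_neg, FreeAlgebra.lift_ι_apply, Mgen, Mg, Mx]
          exact rel6' _ _ _
  | ag => simp only [map_mul, FreeAlgebra.lift_ι_apply, Mgen, Ma, Mg]
          exact rel7' _ _ _
  | ax => simp only [map_mul, map_sub, map_smul, map_neg, map_pow,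
            FreeAlgebra.lift_ι_apply, Mgen, Ma, Mb, Mg, Mx]
          exact rel8' _ _ _ _ _ _ _ hd hξ2 h2p
  | bg => simp only [map_mul, map_neg, FreeAlgebra.lift_ι_apply, Mgen, Mb, Mg]
          exact rel9' _
  | bx => simp only [map_mul, map_sub, map_smul, map_pow,
            FreeAlgebra.lift_ι_apply, Mgen, Ma, Mb, Mg, Mx]
          exact rel10' _ _ _ _ _ _ _ hd hξ2 hq

/-- For `(i,j) ∈ Λ`, the given matrices define a left `D`-module structure `V_{i,j}`
on `k²` (i.e. the assignment extends to an algebra map `D → M₂(k)`); each `V_{i,j}`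
is simple (it has no nontrivial invariant subspace), and `V_{i,j} ≅ V_{k,l}` as
`D`-modules (i.e. there is an invertible intertwiner) implies `(i,j) = (k,l)`. -/
theorem stmt_8 (k : Type) [Field k] [IsAlgClosed k] [CharZero k] (ξ θ : k)
    (hξ : IsPrimitiveRoot ξ 4) (hθ : θ ^ 2 = 2 * ξ) :
    (∀ i j : Fin 4, ¬(2 * (i : ℕ)) ≡ (j : ℕ) [MOD 4] →
      ∃ ρ : DAlg k ξ θ →ₐ[k] Matrix (Fin 2) (Fin 2) k, IsRepV k ξ θ i j ρ) ∧
    (∀ i j : Fin 4, ¬(2 * (i : ℕ)) ≡ (j : ℕ) [MOD 4] →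
      ∀ ρ : DAlg k ξ θ →ₐ[k] Matrix (Fin 2) (Fin 2) k, IsRepV k ξ θ i j ρ →
        ∀ W : Submodule k (Fin 2 → k),
          (∀ (d : DAlg k ξ θ), ∀ v ∈ W, (ρ d).mulVec v ∈ W) → W = ⊥ ∨ W = ⊤) ∧
    (∀ i j i' j' : Fin 4, ¬(2 * (i : ℕ)) ≡ (j : ℕ) [MOD 4] →
      ¬(2 * (i' : ℕ)) ≡ (j' : ℕ) [MOD 4] →
      ∀ ρ ρ' : DAlg k ξ θ →ₐ[k] Matrix (Fin 2) (Fin 2) k,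
        IsRepV k ξ θ i j ρ → IsRepV k ξ θ i' j' ρ' →
        (∃ P : Matrix (Fin 2) (Fin 2) k, IsUnit P ∧ ∀ d : DAlg k ξ θ,
          ρ' d * P = P * ρ d) →
        (i, j) = (i', j')) := by
  have hξ0 : ξ ≠ 0 := hξ.ne_zero (by norm_num)
  have hξ4 : ξ^4 = 1 := hξ.pow_eq_one
  have hξ2 : ξ^2 = -1 := by
    have h2 : ξ^2 ≠ 1 := hξ.pow_ne_one_of_pos_of_lt (by norm_num) (by norm_num)
    have h : (ξ^2 - 1) * (ξ^2 + 1) = 0 := by linear_combination hξ4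
    rcases mul_eq_zero.1 h with h | h
    · exact absurd (sub_eq_zero.1 h) h2
    · linear_combination h
  have hθ0 : θ ≠ 0 := by
    intro h
    exact (mul_ne_zero two_ne_zero hξ0) (by rw [← hθ, h]; ring)
  have hkey : ∀ i j : Fin 4, ¬(2 * (i : ℕ)) ≡ (j : ℕ) [MOD 4] →
      (-1 : k) ^ (i : ℕ) ≠ ξ ^ (j : ℕ) := by
    intro i j hij heq
    apply hij
    rw [show (-1 : k) ^ (i : ℕ) = ξ^(2*(i:ℕ)) by rw [← hξ2, ← pow_mul]] at heq
    have hj4 : (j:ℕ) < 4 := j.isLt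
    have h1 : ξ ^ (2*(i:ℕ) + (4 - (j:ℕ))) = 1 := by
      rw [pow_add, heq, ← pow_add, show (j:ℕ) + (4 - (j:ℕ)) = 4 by omega, hξ4]
    have hdvd : 4 ∣ 2*(i:ℕ) + (4 - (j:ℕ)) := (hξ.pow_eq_one_iff_dvd _).1 h1
    show 2*(i:ℕ) % 4 = (j:ℕ) % 4
    omega
  refine ⟨?_, ?_, ?_⟩
  · -- existence of the representation
    intro i j hij
    refine ⟨RingQuot.liftAlgHom k ⟨FreeAlgebra.lift k (Mgen k ξ θ i j),
      liftRel k ξ θ hξ hθ i j⟩, ?_, ?_, ?_, ?_⟩ <;>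
      simp [aD, bD, gD, xD, RingQuot.liftAlgHom_mkAlgHom_apply, Mgen]
  · -- simplicity
    intro i j hij ρ hρ W hW
    obtain ⟨ha, hb, hg, hx⟩ := hρ
    by_cases hbot : W = ⊥
    · exact Or.inl hbot
    right
    obtain ⟨v, hvW, hv0⟩ := (Submodule.ne_bot_iff W).1 hbot
    have he1 : (![1,0] : Fin 2 → k) ∈ W := by
      have h1 : (Ma k ξ i).mulVec v ∈ W := by
        have := hW (aD k ξ θ) v hvW; rwa [ha] at this
      have h2 : (Ma k ξ i).mulVec v - ξ^((i:ℕ)+1) • v ∈ W :=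
        W.sub_mem h1 (W.smul_mem _ hvW)
      have hform : (Ma k ξ i).mulVec v - ξ^((i:ℕ)+1) • v
          = ((ξ^(i:ℕ) - ξ^((i:ℕ)+1)) * v 0) • ![1,0] := by
        funext t; fin_cases t <;>
          simp [Ma, Matrix.mulVec, dotProduct, Fin.sum_univ_two] <;> ring
      by_cases hv00 : v 0 = 0
      · have hv1 : v 1 ≠ 0 := by
          intro h; apply hv0; funext t; fin_cases t <;> simpa [hv00]
        have he2 : (![0,1] : Fin 2 → k) ∈ W := by
          have hv : (![0,1] : Fin 2 → k) = (v 1)⁻¹ • v := by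
            funext t; fin_cases t <;> simp [hv00, inv_mul_cancel₀ hv1]
          rw [hv]; exact W.smul_mem _ hvW
        have h3 := hW (bD k ξ θ) _ he2
        rw [hb] at h3
        have hmb : (Mb k).mulVec ![0,1] = (![1,0] : Fin 2 → k) := by
          funext t; fin_cases t <;>
            simp [Mb, Matrix.mulVec, dotProduct, Fin.sum_univ_two]
        rwa [hmb] at h3
      · have hc : (ξ^(i:ℕ) - ξ^((i:ℕ)+1)) * v 0 ≠ 0 := by
          refine mul_ne_zero ?_ hv00
          intro h
          have hξ1 : ξ ≠ 1 := hξ.ne_one (by norm_num)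
          apply hξ1
          have h4 := sub_eq_zero.1 h
          have h5 : ξ^(i:ℕ) * (1 - ξ) = 0 := by
            rw [pow_succ] at h4; linear_combination h4
          rcases mul_eq_zero.1 h5 with h6 | h6
          · exact absurd h6 (pow_ne_zero _ hξ0)
          · exact (sub_eq_zero.1 h6).symm
        rw [hform] at h2
        have h7 := W.smul_mem ((ξ^(i:ℕ) - ξ^((i:ℕ)+1)) * v 0)⁻¹ h2
        rwa [smul_smul, inv_mul_cancel₀ hc, one_smul] at h7
    have hq0 : θ * ξ ^ (((i : ℕ) : ℤ) - 1) * ((-1 : k) ^ (i : ℕ) - ξ ^ (j:ℕ)) ≠ 0 := by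
      refine mul_ne_zero (mul_ne_zero hθ0 (zpow_ne_zero _ hξ0)) ?_
      intro h
      exact hkey i j hij (sub_eq_zero.1 h)
    have he2 : (![0,1] : Fin 2 → k) ∈ W := by
      have h3 := hW (xD k ξ θ) _ he1
      rw [hx] at h3
      have hmx : (Mx k ξ θ i j).mulVec ![1,0]
          = (θ * ξ ^ (((i : ℕ) : ℤ) - 1) * ((-1 : k) ^ (i : ℕ) - ξ ^ (j:ℕ))) • ![0,1] := by
        funext t; fin_cases t <;>
          simp [Mx, Matrix.mulVec, dotProduct, Fin.sum_univ_two]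
      rw [hmx] at h3
      have h8 := W.smul_mem
        (θ * ξ ^ (((i : ℕ) : ℤ) - 1) * ((-1 : k) ^ (i : ℕ) - ξ ^ (j:ℕ)))⁻¹ h3
      rwa [smul_smul, inv_mul_cancel₀ hq0, one_smul] at h8
    rw [eq_top_iff]
    intro u _
    have hu : u = u 0 • ![1,0] + u 1 • (![0,1] : Fin 2 → k) := by
      funext t; fin_cases t <;> simp
    rw [hu]
    exact W.add_mem (W.smul_mem _ he1) (W.smul_mem _ he2)
  · -- pairwise non-isomorphic
    intro i j i' j' hij hij' ρ ρ' hρ hρ' hiso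
    obtain ⟨P, hPu, hPint⟩ := hiso
    obtain ⟨ha, hb, hg, hx⟩ := hρ
    obtain ⟨ha', hb', hg', hx'⟩ := hρ'
    have hbP := hPint (bD k ξ θ); rw [hb, hb'] at hbP
    have hP10 : P 1 0 = 0 := by
      have h := Matrix.ext_iff.2 hbP 0 0
      simpa [Mb, Matrix.mul_apply, Fin.sum_univ_two] using h
    have hdet : P.det ≠ 0 := ((Matrix.isUnit_iff_isUnit_det P).1 hPu).ne_zero
    have hP00 : P 0 0 ≠ 0 := by
      intro h
      apply hdet
      rw [Matrix.det_fin_two, hP10, h]; ring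
    have haP := hPint (aD k ξ θ); rw [ha, ha'] at haP
    have hii : ξ^((i':ℕ)) * P 0 0 = ξ^((i:ℕ)) * P 0 0 := by
      have h := Matrix.ext_iff.2 haP 0 0
      simp [Ma, Matrix.mul_apply, Fin.sum_univ_two] at h
      linear_combination h
    have hgP := hPint (gD k ξ θ); rw [hg, hg'] at hgP
    have hjj : ξ^((j':ℕ)) * P 0 0 = ξ^((j:ℕ)) * P 0 0 := by
      have h := Matrix.ext_iff.2 hgP 0 0
      simp [Mg, Matrix.mul_apply, Fin.sum_univ_two] at h
      linear_combination h
    have hi : i = i' :=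
      Fin.val_injective (hξ.pow_inj i.isLt i'.isLt
        (mul_right_cancel₀ hP00 hii).symm)
    have hj : j = j' :=
      Fin.val_injective (hξ.pow_inj j.isLt j'.isLt
        (mul_right_cancel₀ hP00 hjj).symm)
    rw [hi, hj]

end
end

section
/- The quotient of the free associative k-algebra on generators x, y by the two-sided ideal generated by x^2 + 2ξ·y^2, xy + yx, and x^4 has dimension 8 over k, with linear basis {x^m y^n : 0 ≤ m ≤ 3, 0 ≤ n ≤ 1}. (This algebra is the Nichols algebra B(V_{1,j}) for j ∈ {1,3}.) -/
noncomputable section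

/-- Generators of the Nichols algebra `B(V_{1,j})`. -/
inductive NGen : Type
  | x | y

variable (k : Type) [Field k] (ξ : k)

namespace NGen

/-- Shorthand for the generator `x` of the free algebra. -/
abbrev X : FreeAlgebra k NGen := FreeAlgebra.ι k NGen.x
/-- Shorthand for the generator `y` of the free algebra. -/
abbrev Y : FreeAlgebra k NGen := FreeAlgebra.ι k NGen.y

end NGen

open NGen

/-- The defining relations of `B(V_{1,j})`:
`x² + 2ξ·y² = 0`, `xy + yx = 0`, `x⁴ = 0`. -/
inductive NRel : FreeAlgebra k NGen → FreeAlgebra k NGen → Prop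
  | r1 : NRel (X k ^ 2 + (2 * ξ) • (Y k ^ 2)) 0
  | r2 : NRel (X k * Y k + Y k * X k) 0
  | r3 : NRel (X k ^ 4) 0

/-- The Nichols algebra `B(V_{1,j})` (`j ∈ {1,3}`) as an algebra. -/
abbrev NAlg : Type := RingQuot (NRel k ξ)

/-- The image of `x` in the quotient. -/
def xN : NAlg k ξ := RingQuot.mkAlgHom k (NRel k ξ) (X k)
/-- The image of `y` in the quotient. -/
def yN : NAlg k ξ := RingQuot.mkAlgHom k (NRel k ξ) (Y k)

abbrev NI : Type := Fin 4 × Fin 2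

def nex (i j : NI) : ℕ := i.1.val + j.1.val + 2 * (i.2.val * j.2.val)
def nsg (i j : NI) : ℤ := if nex i j < 4 then (-1 : ℤ)^(i.2.val * j.1.val) else 0
def npw (i j : NI) : ℕ := i.2.val * j.2.val
def nidx (i j : NI) : NI := (⟨nex i j % 4, by omega⟩, ⟨(i.2.val + j.2.val) % 2, by omega⟩)

theorem nP : ∀ i j l : NI,
    (nsg i j * nsg (nidx i j) l = 0 ∧ nsg j l * nsg i (nidx j l) = 0) ∨
    (nidx (nidx i j) l = nidx i (nidx j l) ∧
      nsg i j * nsg (nidx i j) l = nsg j l * nsg i (nidx j l) ∧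
      npw i j + npw (nidx i j) l = npw j l + npw i (nidx j l)) := by decide

variable (k : Type) [Field k] (ξ : k)

/-- structure constant -/
def ncv (i j : NI) : k := (nsg i j : k) * (-(2 * ξ)⁻¹) ^ npw i j

/-- model matrices: left regular representation -/
def nM (i : NI) : Matrix NI NI k := Matrix.of fun t j => if t = nidx i j then ncv k ξ i j else 0

theorem nM_mul (i j : NI) : nM k ξ i * nM k ξ j = ncv k ξ i j • nM k ξ (nidx i j) := by
  ext t l
  simp only [Matrix.mul_apply, nM, Matrix.smul_apply, Matrix.of_apply, smul_eq_mul]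
  rw [Finset.sum_eq_single (nidx j l)]
  · rcases nP i j l with ⟨h1, h2⟩ | ⟨he, hs, hp⟩
    · have z1 : ncv k ξ i (nidx j l) * ncv k ξ j l = 0 := by
        simp only [ncv]
        have : ((nsg j l * nsg i (nidx j l) : ℤ) : k) = 0 := by rw [h2]; simp
        push_cast at this
        calc ((nsg i (nidx j l) : k) * (-(2 * ξ)⁻¹) ^ npw i (nidx j l)) *
              ((nsg j l : k) * (-(2 * ξ)⁻¹) ^ npw j l)
            = ((nsg j l : k) * (nsg i (nidx j l) : k)) *
              ((-(2 * ξ)⁻¹) ^ npw i (nidx j l) * (-(2 * ξ)⁻¹) ^ npw j l) := by ring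
          _ = 0 := by rw [this]; ring
      have z2 : ncv k ξ i j * ncv k ξ (nidx i j) l = 0 := by
        simp only [ncv]
        have : ((nsg i j * nsg (nidx i j) l : ℤ) : k) = 0 := by rw [h1]; simp
        push_cast at this
        calc ((nsg i j : k) * (-(2 * ξ)⁻¹) ^ npw i j) *
              ((nsg (nidx i j) l : k) * (-(2 * ξ)⁻¹) ^ npw (nidx i j) l)
            = ((nsg i j : k) * (nsg (nidx i j) l : k)) *
              ((-(2 * ξ)⁻¹) ^ npw i j * (-(2 * ξ)⁻¹) ^ npw (nidx i j) l) := by ring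
          _ = 0 := by rw [this]; ring
      rw [if_pos rfl]
      split_ifs <;> simp [z1, z2]
    · have key : ncv k ξ i (nidx j l) * ncv k ξ j l = ncv k ξ i j * ncv k ξ (nidx i j) l := by
        simp only [ncv]
        have hs' : ((nsg j l * nsg i (nidx j l) : ℤ) : k) =
            ((nsg i j * nsg (nidx i j) l : ℤ) : k) := by rw [hs]
        push_cast at hs'
        calc ((nsg i (nidx j l) : k) * (-(2 * ξ)⁻¹) ^ npw i (nidx j l)) *
              ((nsg j l : k) * (-(2 * ξ)⁻¹) ^ npw j l)
            = ((nsg j l : k) * (nsg i (nidx j l) : k)) *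
              (-(2 * ξ)⁻¹) ^ (npw j l + npw i (nidx j l)) := by rw [pow_add]; ring
          _ = ((nsg i j : k) * (nsg (nidx i j) l : k)) *
              (-(2 * ξ)⁻¹) ^ (npw i j + npw (nidx i j) l) := by rw [hs', hp]
          _ = _ := by rw [pow_add]; ring
      rw [← he, if_pos rfl]
      by_cases ht : t = nidx (nidx i j) l
      · rw [if_pos ht, if_pos ht, key]
      · rw [if_neg ht, if_neg ht, zero_mul, mul_zero]
  · intro b _ hb
    simp [if_neg hb]
  · simp

theorem nM_one : nM k ξ (0, 0) = 1 := by
  ext t j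
  fin_cases t <;> fin_cases j <;>
    norm_num [nM, nidx, nex, ncv, nsg, npw, Matrix.one_apply]

abbrev nMx : Matrix NI NI k := nM k ξ (1, 0)
abbrev nMy : Matrix NI NI k := nM k ξ (0, 1)

theorem nMxx : nMx k ξ * nMx k ξ = nM k ξ (2, 0) := by
  rw [nM_mul]
  have h1 : nidx (1, 0) (1, 0) = (2, 0) := by decide
  have h2 : nsg ((1:Fin 4), (0:Fin 2)) (1, 0) = 1 := by decide
  have h3 : npw ((1:Fin 4), (0:Fin 2)) (1, 0) = 0 := by decide
  rw [h1]; simp [ncv, h2, h3]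

theorem nMyy : nMy k ξ * nMy k ξ = (-(2 * ξ)⁻¹) • nM k ξ (2, 0) := by
  rw [nM_mul]
  have h1 : nidx (0, 1) (0, 1) = (2, 0) := by decide
  have h2 : nsg ((0:Fin 4), (1:Fin 2)) (0, 1) = 1 := by decide
  have h3 : npw ((0:Fin 4), (1:Fin 2)) (0, 1) = 1 := by decide
  rw [h1]; simp [ncv, h2, h3]

theorem nMrel1 (hξ : 2 * ξ ≠ 0) : nMx k ξ ^ 2 + (2 * ξ) • nMy k ξ ^ 2 = 0 := by
  rw [pow_two, pow_two, nMxx, nMyy, smul_smul]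
  rw [show (2 * ξ) * (-(2 * ξ)⁻¹) = -1 by rw [mul_neg, mul_inv_cancel₀ hξ]]
  simp

theorem nMrel2 : nMx k ξ * nMy k ξ + nMy k ξ * nMx k ξ = 0 := by
  rw [nM_mul, nM_mul]
  have h1 : nidx (1, 0) (0, 1) = (1, 1) := by decide
  have h1' : nidx (0, 1) (1, 0) = (1, 1) := by decide
  have h2 : nsg ((1:Fin 4), (0:Fin 2)) (0, 1) = 1 := by decide
  have h2' : nsg ((0:Fin 4), (1:Fin 2)) (1, 0) = -1 := by decide
  have h3 : npw ((1:Fin 4), (0:Fin 2)) (0, 1) = 0 := by decide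
  have h3' : npw ((0:Fin 4), (1:Fin 2)) (1, 0) = 0 := by decide
  rw [h1, h1']
  simp [ncv, h2, h2', h3, h3']

theorem nMrel3 : nMx k ξ ^ 4 = 0 := by
  have : nMx k ξ ^ 4 = (nMx k ξ * nMx k ξ) * (nMx k ξ * nMx k ξ) := by
    rw [show nMx k ξ ^ 4 = nMx k ξ ^ 2 * nMx k ξ ^ 2 from by rw [← pow_add], pow_two]
  rw [this, nMxx, nM_mul]
  have h2 : nsg ((2:Fin 4), (0:Fin 2)) (2, 0) = 0 := by decide
  simp [ncv, h2]

theorem nM_mul_of {i j t : NI} (h1 : nidx i j = t) (h2 : nsg i j = 1) (h3 : npw i j = 0) :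
    nM k ξ i * nM k ξ j = nM k ξ t := by
  rw [nM_mul, h1]; simp [ncv, h2, h3]

theorem nM_monomial (m : Fin 4) (n : Fin 2) :
    nMx k ξ ^ (m : ℕ) * nMy k ξ ^ (n : ℕ) = nM k ξ (m, n) := by
  have e0 : nMx k ξ ^ (0:ℕ) = nM k ξ (0, 0) := by rw [pow_zero, nM_one]
  have e1 : nMx k ξ ^ (1:ℕ) = nM k ξ (1, 0) := by rw [pow_one]
  have e2 : nMx k ξ ^ (2:ℕ) = nM k ξ (2, 0) := by rw [pow_two, nMxx]
  have e3 : nMx k ξ ^ (3:ℕ) = nM k ξ (3, 0) := by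
    rw [pow_succ, e2]
    exact nM_mul_of k ξ (by decide) (by decide) (by decide)
  have exy : ∀ m : Fin 4, nM k ξ (m, 0) * nMy k ξ = nM k ξ (m, 1) := by
    intro m
    fin_cases m <;> exact nM_mul_of k ξ (by decide) (by decide) (by decide)
  fin_cases m <;> fin_cases n <;>
    simp only [e0, e1, e2, e3, pow_zero, pow_one, mul_one] <;>
    first
      | rfl
      | exact exy _

/-- column extraction -/
def ncol : Matrix NI NI k →ₗ[k] (NI → k) where
  toFun A := fun t => A t (0, 0)
  map_add' A B := rfl
  map_smul' c A := rfl

theorem ncol_nM (i : NI) : ncol k (nM k ξ i) = Pi.single i 1 := by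
  funext t
  have h1 : nidx i (0, 0) = i := by revert i; decide
  have h2 : nsg i (0, 0) = 1 := by revert i; decide
  have h3 : npw i (0, 0) = 0 := by revert i; decide
  show nM k ξ i t (0, 0) = (Pi.single i (1 : k) : NI → k) t
  simp only [ncol, LinearMap.coe_mk, AddHom.coe_mk, nM, Matrix.of_apply, h1, ncv, h2, h3,
    Int.cast_one, pow_zero, mul_one, one_mul, Pi.single_apply]

section NicholsAux

variable (k : Type) [Field k] (ξ : k)

def nρ₀ : FreeAlgebra k NGen →ₐ[k] Matrix NI NI k :=
  FreeAlgebra.lift k fun g => match g with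
    | NGen.x => nMx k ξ
    | NGen.y => nMy k ξ

theorem nρ₀X : nρ₀ k ξ (X k) = nMx k ξ := FreeAlgebra.lift_ι_apply _ _
theorem nρ₀Y : nρ₀ k ξ (Y k) = nMy k ξ := FreeAlgebra.lift_ι_apply _ _

theorem nrel_hom (hξ : 2 * ξ ≠ 0) :
    ∀ ⦃a b⦄, NRel k ξ a b → nρ₀ k ξ a = nρ₀ k ξ b := by
  rintro a b (_ | _ | _)
  · simp only [map_add, map_pow, map_smul, map_zero, nρ₀X, nρ₀Y]
    exact nMrel1 k ξ hξ
  · simp only [map_add, map_mul, map_zero, nρ₀X, nρ₀Y]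
    exact nMrel2 k ξ
  · simp only [map_pow, map_zero, nρ₀X]
    exact nMrel3 k ξ

def nρ (hξ : 2 * ξ ≠ 0) : NAlg k ξ →ₐ[k] Matrix NI NI k :=
  RingQuot.liftAlgHom k ⟨nρ₀ k ξ, nrel_hom k ξ hξ⟩

theorem nρ_x (hξ : 2 * ξ ≠ 0) : nρ k ξ hξ (xN k ξ) = nMx k ξ := by
  rw [xN, nρ, RingQuot.liftAlgHom_mkAlgHom_apply, nρ₀X]

theorem nρ_y (hξ : 2 * ξ ≠ 0) : nρ k ξ hξ (yN k ξ) = nMy k ξ := by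
  rw [yN, nρ, RingQuot.liftAlgHom_mkAlgHom_apply, nρ₀Y]

def nv : NI → NAlg k ξ := fun i => xN k ξ ^ (i.1 : ℕ) * yN k ξ ^ (i.2 : ℕ)

theorem nρ_nv (hξ : 2 * ξ ≠ 0) (i : NI) : nρ k ξ hξ (nv k ξ i) = nM k ξ i := by
  rw [nv, map_mul, map_pow, map_pow, nρ_x, nρ_y]
  exact nM_monomial k ξ i.1 i.2

theorem nv_li (hξ : 2 * ξ ≠ 0) : LinearIndependent k (nv k ξ) := by
  have hb : LinearIndependent k (fun i : NI => (Pi.single i 1 : NI → k)) := by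
    have h := (Pi.basisFun k NI).linearIndependent
    convert h using 1
    funext i
    simp [Pi.basisFun_apply]
  apply LinearIndependent.of_comp ((ncol k).comp (nρ k ξ hξ).toLinearMap)
  convert hb using 1
  funext i
  simp only [Function.comp_apply, LinearMap.coe_comp, AlgHom.toLinearMap_apply]
  rw [nρ_nv, ncol_nM]

theorem nrel1 : xN k ξ ^ 2 + (2 * ξ) • yN k ξ ^ 2 = 0 := by
  have h := RingQuot.mkAlgHom_rel k (NRel.r1 (k := k) (ξ := ξ))
  simpa only [map_add, map_pow, map_smul, map_zero, xN, yN] using h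

theorem nrel2 : xN k ξ * yN k ξ + yN k ξ * xN k ξ = 0 := by
  have h := RingQuot.mkAlgHom_rel k (NRel.r2 (k := k) (ξ := ξ))
  simpa only [map_add, map_mul, map_zero, xN, yN] using h

theorem nrel3 : xN k ξ ^ 4 = 0 := by
  have h := RingQuot.mkAlgHom_rel k (NRel.r3 (k := k) (ξ := ξ))
  simpa only [map_pow, map_zero, xN] using h


theorem nv_span (hξ : 2 * ξ ≠ 0) :
    ⊤ ≤ Submodule.span k (Set.range (nv k ξ)) := by
  set S : Submodule k (NAlg k ξ) := Submodule.span k (Set.range (nv k ξ)) with hS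
  have hmem : ∀ i : NI, nv k ξ i ∈ S := fun i => Submodule.subset_span ⟨i, rfl⟩
  have hone : (1 : NAlg k ξ) ∈ S := by
    have h : nv k ξ (0, 0) = 1 := by simp [nv]
    rw [← h]; exact hmem _
  have hpow4 : ∀ m : ℕ, xN k ξ ^ (4 + m) = 0 := by
    intro m; rw [pow_add, nrel3, zero_mul]
  -- powers of x lie in S
  have epow : ∀ n : ℕ, xN k ξ ^ n ∈ S := by
    intro n
    rcases Nat.lt_or_ge n 4 with h | h
    · have h4 : ∀ a : Fin 4, xN k ξ ^ (a : ℕ) ∈ S := by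
        intro a
        have := hmem (a, 0)
        simpa [nv] using this
      interval_cases n
      · exact h4 0
      · exact h4 1
      · exact h4 2
      · exact h4 3
    · obtain ⟨m, rfl⟩ := Nat.exists_eq_add_of_le h
      rw [hpow4]; exact zero_mem S
  have epowy : ∀ n : ℕ, xN k ξ ^ n * yN k ξ ∈ S := by
    intro n
    rcases Nat.lt_or_ge n 4 with h | h
    · have h4 : ∀ a : Fin 4, xN k ξ ^ (a : ℕ) * yN k ξ ∈ S := by
        intro a
        have := hmem (a, 1)
        simpa [nv] using this
      interval_cases n
      · exact h4 0
      · exact h4 1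
      · exact h4 2
      · exact h4 3
    · obtain ⟨m, rfl⟩ := Nat.exists_eq_add_of_le h
      rw [hpow4, zero_mul]; exact zero_mem S
  -- transfer membership along linear relations
  have memadd : ∀ s t : NAlg k ξ, s + t = 0 → s ∈ S → t ∈ S := by
    intro s t h hs
    have h2 : t = -s := eq_neg_of_add_eq_zero_right h
    rw [h2]
    exact neg_mem hs
  have memsmul : ∀ (c : k), c ≠ 0 → ∀ s : NAlg k ξ, c • s ∈ S → s ∈ S := by
    intro c hc s h
    have h2 := Submodule.smul_mem S c⁻¹ h
    rwa [inv_smul_smul₀ hc] at h2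
  -- generators are closed under right mult by x and by y
  have hgenx : ∀ i : NI, nv k ξ i * xN k ξ ∈ S := by
    rintro ⟨a, b⟩
    fin_cases b
    · show xN k ξ ^ (a : ℕ) * yN k ξ ^ ((0 : Fin 2) : ℕ) * xN k ξ ∈ S
      simp only [Fin.val_zero, pow_zero, mul_one]
      rw [← pow_succ]
      exact epow _
    · show xN k ξ ^ (a : ℕ) * yN k ξ ^ ((1 : Fin 2) : ℕ) * xN k ξ ∈ S
      simp only [Fin.val_one, pow_one]
      have key : xN k ξ ^ ((a : ℕ) + 1) * yN k ξ + xN k ξ ^ (a : ℕ) * yN k ξ * xN k ξ = 0 := by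
        rw [pow_succ, mul_assoc (xN k ξ ^ (a : ℕ)) (xN k ξ) (yN k ξ),
          mul_assoc (xN k ξ ^ (a : ℕ)) (yN k ξ) (xN k ξ), ← mul_add, nrel2, mul_zero]
      exact memadd _ _ key (epowy _)
  have hgeny : ∀ i : NI, nv k ξ i * yN k ξ ∈ S := by
    rintro ⟨a, b⟩
    fin_cases b
    · show xN k ξ ^ (a : ℕ) * yN k ξ ^ ((0 : Fin 2) : ℕ) * yN k ξ ∈ S
      simp only [Fin.val_zero, pow_zero, mul_one]
      exact epowy _
    · show xN k ξ ^ (a : ℕ) * yN k ξ ^ ((1 : Fin 2) : ℕ) * yN k ξ ∈ S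
      simp only [Fin.val_one, pow_one]
      have key : xN k ξ ^ (a : ℕ) * xN k ξ ^ 2 +
          xN k ξ ^ (a : ℕ) * ((2 * ξ) • yN k ξ ^ 2) = 0 := by
        rw [← mul_add, nrel1, mul_zero]
      have h1 : xN k ξ ^ (a : ℕ) * ((2 * ξ) • yN k ξ ^ 2) ∈ S := by
        refine memadd _ _ key ?_
        rw [← pow_add]
        exact epow _
      have h2 : xN k ξ ^ (a : ℕ) * ((2 * ξ) • yN k ξ ^ 2) =
          (2 * ξ) • (xN k ξ ^ (a : ℕ) * yN k ξ ^ 2) := mul_smul_comm _ _ _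
      rw [h2] at h1
      have h3 := memsmul _ hξ _ h1
      rwa [pow_two, ← mul_assoc] at h3
  -- closure under right multiplication
  have hclx : ∀ s ∈ S, s * xN k ξ ∈ S := by
    intro s hs
    induction hs using Submodule.span_induction with
    | mem t ht => obtain ⟨i, rfl⟩ := ht; exact hgenx i
    | zero => rw [zero_mul]; exact zero_mem S
    | add u v hu hv hu' hv' => rw [add_mul]; exact add_mem hu' hv'
    | smul a u hu hu' => rw [smul_mul_assoc]; exact Submodule.smul_mem S a hu'
  have hcly : ∀ s ∈ S, s * yN k ξ ∈ S := by
    intro s hs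
    induction hs using Submodule.span_induction with
    | mem t ht => obtain ⟨i, rfl⟩ := ht; exact hgeny i
    | zero => rw [zero_mul]; exact zero_mem S
    | add u v hu hv hu' hv' => rw [add_mul]; exact add_mem hu' hv'
    | smul a u hu hu' => rw [smul_mul_assoc]; exact Submodule.smul_mem S a hu'
  have hclxp : ∀ s ∈ S, ∀ n : ℕ, s * xN k ξ ^ n ∈ S := by
    intro s hs n
    induction n with
    | zero => rw [pow_zero, mul_one]; exact hs
    | succ m ih => rw [pow_succ, ← mul_assoc]; exact hclx _ ih
  have hclyp : ∀ s ∈ S, ∀ n : ℕ, s * yN k ξ ^ n ∈ S := by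
    intro s hs n
    induction n with
    | zero => rw [pow_zero, mul_one]; exact hs
    | succ m ih => rw [pow_succ, ← mul_assoc]; exact hcly _ ih
  have hmul : ∀ t ∈ S, ∀ s ∈ S, s * t ∈ S := by
    intro t ht
    induction ht using Submodule.span_induction with
    | mem u hu =>
        obtain ⟨i, rfl⟩ := hu
        intro s hs
        rw [nv, ← mul_assoc]
        exact hclyp _ (hclxp s hs _) _
    | zero => intro s hs; rw [mul_zero]; exact zero_mem S
    | add u v hu hv hu' hv' =>
        intro s hs
        rw [mul_add]; exact add_mem (hu' s hs) (hv' s hs)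
    | smul a u hu hu' =>
        intro s hs
        rw [mul_smul_comm]; exact Submodule.smul_mem S a (hu' s hs)
  -- every element lies in S
  intro z _
  obtain ⟨w, rfl⟩ := RingQuot.mkAlgHom_surjective k (NRel k ξ) z
  refine FreeAlgebra.induction k NGen
    (motive := fun w => RingQuot.mkAlgHom k (NRel k ξ) w ∈ S) ?_ ?_ ?_ ?_ w
  · intro r
    rw [AlgHom.commutes, Algebra.algebraMap_eq_smul_one]
    exact Submodule.smul_mem S r hone
  · intro g
    cases g with
    | x =>
        have h : nv k ξ (1, 0) = xN k ξ := by simp [nv, xN]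
        rw [show RingQuot.mkAlgHom k (NRel k ξ) (FreeAlgebra.ι k NGen.x) = xN k ξ from rfl, ← h]
        exact hmem _
    | y =>
        have h : nv k ξ (0, 1) = yN k ξ := by simp [nv, yN]
        rw [show RingQuot.mkAlgHom k (NRel k ξ) (FreeAlgebra.ι k NGen.y) = yN k ξ from rfl, ← h]
        exact hmem _
  · intro a b ha hb
    rw [map_mul]
    exact hmul _ hb _ ha
  · intro a b ha hb
    rw [map_add]
    exact add_mem ha hb

end NicholsAux


/-- The quotient of the free algebra on `x, y` by the relations
`x² + 2ξ·y² = 0`, `xy + yx = 0`, `x⁴ = 0` is 8-dimensional, with linear basis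
`{xᵐ yⁿ : 0 ≤ m ≤ 3, 0 ≤ n ≤ 1}`. -/
theorem stmt_10 (k : Type) [Field k] [IsAlgClosed k] [CharZero k] (ξ : k)
    (hξ : IsPrimitiveRoot ξ 4) :
    Module.finrank k (NAlg k ξ) = 8 ∧
    ∃ B : Module.Basis (Fin 4 × Fin 2) k (NAlg k ξ),
      ∀ (m : Fin 4) (n : Fin 2), B (m, n) = xN k ξ ^ (m : ℕ) * yN k ξ ^ (n : ℕ) := by
  have hξ0 : ξ ≠ 0 := hξ.ne_zero (by norm_num)
  have h2ξ : 2 * ξ ≠ 0 := mul_ne_zero two_ne_zero hξ0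
  let B : Module.Basis (Fin 4 × Fin 2) k (NAlg k ξ) :=
    Module.Basis.mk (nv_li k ξ h2ξ) (nv_span k ξ h2ξ)
  have hB : ∀ (m : Fin 4) (n : Fin 2),
      B (m, n) = xN k ξ ^ (m : ℕ) * yN k ξ ^ (n : ℕ) := by
    intro m n
    rw [show B (m, n) = nv k ξ (m, n) from Module.Basis.mk_apply _ _ _]
    rfl
  refine ⟨?_, B, hB⟩
  rw [Module.finrank_eq_card_basis B]
  simp

end
end
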